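/- Let Δ be a convex subgroup of Γ with {0} ≠ Δ ≠ Γ, with coarsened valuation ring 𝒪̇ and its maximal ideal 𝔪̇, and specialization K̇ = 𝒪̇/𝔪̇. Suppose P ∈ 𝒪̇{Y} ∖ 𝔪̇{Y}, b ∈ 𝒪̇, and h ∈ 𝒪̇ ∖ 𝔪̇. Then ddeg Ṗ_{+ḃ} = ddeg P_{+b} and ddeg Ṗ_{×ḣ} = ddeg P_{×h}, where Ṗ ∈ K̇{Y} is obtained by applying the residue map 𝒪̇ → K̇ to the coefficients of P. -/

import Mathlib

/- Preamble: valued differential fields (equicharacteristic 0, small derivation),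
differential polynomials, dominant degree, pc-sequences, coarsening/specialization,
and the differential-henselian configuration property, following
"Aschenbrenner–van den Dries–van der Hoeven" style conventions. -/

open MvPolynomial

universe u

/-- A valued differential field of equicharacteristic zero with small derivation:
a field `K` with a surjective (additive) valuation `v : K → WithTop Γ` (`v a = ⊤ ↔ a = 0`)
onto an ordered abelian group `Γ`, and a derivation `der`, such that `der` maps the
maximal ideal of the valuation ring into itself, and the residue field has
characteristic zero. -/
structure VDF (K : Type u) [Field K] (Γ : Type u) [AddCommGroup Γ] [LinearOrder Γ] [IsOrderedAddMonoid Γ] where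
  v : K → WithTop Γ
  der : K → K
  v_eq_top_iff : ∀ a : K, v a = ⊤ ↔ a = 0
  v_mul : ∀ a b : K, v (a * b) = v a + v b
  v_add : ∀ a b : K, min (v a) (v b) ≤ v (a + b)
  v_surjective : ∀ γ : Γ, ∃ a : K, v a = (γ : WithTop Γ)
  equichar_zero : ∀ n : ℕ, n ≠ 0 → v (n : K) = 0
  der_add : ∀ a b : K, der (a + b) = der a + der b
  der_mul : ∀ a b : K, der (a * b) = a * der b + der a * b
  small_der : ∀ a : K, 0 < v a → 0 < v (der a)

namespace VDF

variable {K : Type u} [Field K] {Γ : Type u} [AddCommGroup Γ] [LinearOrder Γ] [IsOrderedAddMonoid Γ]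

/-- the derivation of `K` is nontrivial -/
def DerNontrivial (S : VDF K Γ) : Prop := ∃ a : K, S.der a ≠ 0

/-- the valuation of `K` is nontrivial -/
def ValNontrivial (S : VDF K Γ) : Prop := ∃ a : K, S.v a ≠ 0 ∧ S.v a ≠ ⊤

/-- the derivation induced on the residue field is nontrivial:
some element of the valuation ring has derivative a unit of the valuation ring -/
def ResidueDerNontrivial (S : VDF K Γ) : Prop := ∃ a : K, 0 ≤ S.v a ∧ S.v (S.der a) = 0

/-- the residue field `k` is linearly surjective: for all `a_0, …, a_r` in the valuation
ring with `a_r` a unit there is `y` in the valuation ring with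
`1 + a_0 y + a_1 y' + ⋯ + a_r y⁽ʳ⁾ ≡ 0` modulo the maximal ideal -/
def ResidueLinSurj (S : VDF K Γ) : Prop :=
  ∀ (r : ℕ) (a : ℕ → K), (∀ i, i ≤ r → 0 ≤ S.v (a i)) → S.v (a r) = 0 →
    ∃ y : K, 0 ≤ S.v y ∧
      0 < S.v (1 + ∑ i ∈ Finset.range (r + 1), a i * S.der^[i] y)

/-- `K` has few constants: the constant field lies in the valuation ring -/
def FewConstants (S : VDF K Γ) : Prop := ∀ a : K, S.der a = 0 → 0 ≤ S.v a

/-- `K` is asymptotic: for nonzero `f, g` in the maximal ideal,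
`v f > v g ↔ v f' > v g'` -/
def Asymptotic (S : VDF K Γ) : Prop :=
  ∀ f g : K, f ≠ 0 → g ≠ 0 → 0 < S.v f → 0 < S.v g →
    (S.v g < S.v f ↔ S.v (S.der g) < S.v (S.der f))

/-- evaluation of a differential polynomial `P ∈ K{Y}` (the variable `i` of the
multivariate polynomial ring stands for `Y⁽ⁱ⁾`) at `b ∈ K` -/
noncomputable def evalD (S : VDF K Γ) (b : K) (P : MvPolynomial ℕ K) : K :=
  MvPolynomial.eval (fun i => S.der^[i] b) P

/-- `v P`: the minimum valuation of the coefficients of `P` -/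
noncomputable def vP (S : VDF K Γ) (P : MvPolynomial ℕ K) : WithTop Γ :=
  P.support.inf fun m => S.v (P.coeff m)

end VDF

/-- total degree of a monomial -/
def monDeg (m : ℕ →₀ ℕ) : ℕ := m.sum fun _ n => n

/-- the degree-`d` homogeneous part `P_d` of a differential polynomial `P` -/
noncomputable def homPart {K : Type u} [Field K] (P : MvPolynomial ℕ K) (d : ℕ) :
    MvPolynomial ℕ K :=
  ∑ m ∈ P.support.filter fun m => monDeg m = d, monomial m (P.coeff m)

/-- the order `r_P` of a differential polynomial: the largest `r` such that `Y⁽ʳ⁾`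
occurs in `P` -/
noncomputable def dpOrder {K : Type u} [Field K] (P : MvPolynomial ℕ K) : ℕ :=
  P.support.sup fun m => m.support.sup id

/-- the complexity `c(P) = (r_P, s_P, t_P)` of a differential polynomial, ordered
lexicographically -/
noncomputable def dpComplexity {K : Type u} [Field K] (P : MvPolynomial ℕ K) :
    Lex (ℕ × Lex (ℕ × ℕ)) :=
  toLex (dpOrder P, toLex (P.degreeOf (dpOrder P), P.totalDegree))

/-- applying a map `π` to the coefficients of a differential polynomial -/
noncomputable def mapCoeffs {K K' : Type u} [Field K] [Field K'] (π : K → K')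
    (P : MvPolynomial ℕ K) : MvPolynomial ℕ K' :=
  ∑ m ∈ P.support, monomial m (π (P.coeff m))

namespace VDF

variable {K : Type u} [Field K] {Γ : Type u} [AddCommGroup Γ] [LinearOrder Γ] [IsOrderedAddMonoid Γ]

/-- the dominant degree `ddeg P`: the (total) degree of the dominant part of `P`,
i.e. the largest degree of a monomial of `P` whose coefficient has minimum valuation -/
noncomputable def ddeg (S : VDF K Γ) (P : MvPolynomial ℕ K) : ℕ :=
  (P.support.filter fun m => S.v (P.coeff m) = S.vP P).sup monDeg

/-- the additive conjugate `P_{+a} = P(a + Y)` -/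
noncomputable def addConj (S : VDF K Γ) (a : K) (P : MvPolynomial ℕ K) :
    MvPolynomial ℕ K :=
  MvPolynomial.bind₁ (fun i => MvPolynomial.C (S.der^[i] a) + MvPolynomial.X i) P

/-- the multiplicative conjugate `P_{×a} = P(aY)`, using
`(aY)⁽ⁱ⁾ = ∑_{j ≤ i} (i choose j) a⁽ⁱ⁻ʲ⁾ Y⁽ʲ⁾` -/
noncomputable def mulConj (S : VDF K Γ) (a : K) (P : MvPolynomial ℕ K) :
    MvPolynomial ℕ K :=
  MvPolynomial.bind₁
    (fun i => ∑ j ∈ Finset.range (i + 1),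
      MvPolynomial.C ((i.choose j : K) * S.der^[i - j] a) * MvPolynomial.X j) P

/-- `ddeg_{≥γ} P := max { ddeg P_{×f} : f ∈ K^×, v f ≥ γ }` -/
noncomputable def ddegGe (S : VDF K Γ) (γ : Γ) (P : MvPolynomial ℕ K) : ℕ :=
  sSup {d : ℕ | ∃ f : K, f ≠ 0 ∧ (γ : WithTop Γ) ≤ S.v f ∧ d = S.ddeg (S.mulConj f P)}

/-- `K` is differential-henselian: the residue field is linearly surjective, and every
`P ∈ 𝒪{Y}` with `v(P_0) > 0` and `v(P_1) = 0` has a zero in the maximal ideal -/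
def DHenselian (S : VDF K Γ) : Prop :=
  S.ResidueLinSurj ∧
  ∀ P : MvPolynomial ℕ K, P ≠ 0 → (∀ m, 0 ≤ S.v (P.coeff m)) →
    0 < S.vP (homPart P 0) → S.vP (homPart P 1) = 0 →
    ∃ y : K, 0 < S.v y ∧ S.evalD y P = 0

section Sequences

variable {I : Type u} [LinearOrder I]

/-- `(a_ρ)` is a pseudocauchy sequence -/
def IsPcSeq (S : VDF K Γ) (a : I → K) : Prop :=
  ∃ i₀ : I, ∀ i j k : I, i₀ < i → i < j → j < k →
    S.v (a j - a i) < S.v (a k - a j)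

/-- `b` is a pseudolimit of `(a_ρ)`: `v (b - a_ρ)` is eventually strictly increasing -/
def Pseudolim (S : VDF K Γ) (a : I → K) (b : K) : Prop :=
  ∃ i₀ : I, ∀ i j : I, i₀ < i → i < j → S.v (b - a i) < S.v (b - a j)

/-- a sequence pseudoconverges to `0`: its valuations are eventually strictly
increasing -/
def PcToZero (S : VDF K Γ) (c : I → K) : Prop :=
  ∃ i₀ : I, ∀ i j : I, i₀ < i → i < j → S.v (c i) < S.v (c j)

/-- `(a_ρ)` is divergent: it has no pseudolimit in `K` -/
def Divergent (S : VDF K Γ) (a : I → K) : Prop := ¬ ∃ b : K, S.Pseudolim a b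

/-- `γ` is eventually the sequence `γ_ρ = v (a_{ρ+1} - a_ρ)` associated to `(a_ρ)` -/
def GammaEq (S : VDF K Γ) [SuccOrder I] (a : I → K) (γ : I → Γ) : Prop :=
  ∃ i₀ : I, ∀ i : I, i₀ < i → S.v (a (Order.succ i) - a i) = (γ i : WithTop Γ)

/-- the dominant degree of `P` in the cut of `(a_ρ)`: the eventual value of
`ddeg_{≥γ_ρ} P_{+a_ρ}` -/
noncomputable def ddegCut (S : VDF K Γ) (a : I → K) (γ : I → Γ)
    (P : MvPolynomial ℕ K) : ℕ :=
  sSup {d : ℕ | ∃ i₀ : I, ∀ i : I, i₀ < i → S.ddegGe (γ i) (S.addConj (a i) P) = d}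

end Sequences

/-- an embedding of valued differential fields (with value group embedding) -/
structure Hom {L : Type u} [Field L] {Γ' : Type u} [AddCommGroup Γ'] [LinearOrder Γ'] [IsOrderedAddMonoid Γ']
    (S : VDF K Γ) (T : VDF L Γ') where
  toRing : K →+* L
  toGrp : Γ →+ Γ'
  grp_strictMono : StrictMono toGrp
  map_der : ∀ a : K, toRing (S.der a) = T.der (toRing a)
  map_v : ∀ a : K, T.v (toRing a) = WithTop.map (⇑toGrp) (S.v a)

variable {L : Type u} [Field L] {Γ' : Type u} [AddCommGroup Γ'] [LinearOrder Γ'] [IsOrderedAddMonoid Γ']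

/-- an extension is immediate if it induces the same value group and residue field -/
def Hom.Immediate {S : VDF K Γ} {T : VDF L Γ'} (f : Hom S T) : Prop :=
  Function.Surjective f.toGrp ∧
  ∀ b : L, 0 ≤ T.v b → ∃ a : K, 0 ≤ S.v a ∧ 0 < T.v (b - f.toRing a)

/-- `b ∈ L` is differentially algebraic over (the image of) `K` -/
def Hom.DAlgElem {S : VDF K Γ} {T : VDF L Γ'} (f : Hom S T) (b : L) : Prop :=
  ∃ P : MvPolynomial ℕ K, P ≠ 0 ∧ T.evalD b (P.map f.toRing) = 0

/-- the extension `L` is differentially algebraic over `K` -/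
def Hom.DAlgebraic {S : VDF K Γ} {T : VDF L Γ'} (f : Hom S T) : Prop :=
  ∀ b : L, f.DAlgElem b

/-- two pc-sequences in `K` are equivalent: they have the same pseudolimits in every
extension of `K` -/
def EquivPc (S : VDF K Γ) {I : Type u} [LinearOrder I] {J : Type u} [LinearOrder J]
    (a : I → K) (b : J → K) : Prop :=
  ∀ (M : Type u) (Δ : Type u) [Field M] [AddCommGroup Δ] [LinearOrder Δ] [IsOrderedAddMonoid Δ],
    ∀ (T : VDF M Δ) (f : Hom S T) (c : M),
      (T.Pseudolim (fun i => f.toRing (a i)) c ↔ T.Pseudolim (fun j => f.toRing (b j)) c)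

/-- there is a pc-sequence `(b_σ)` equivalent to `(a_ρ)` with `G(b_σ) ⇝ 0` -/
def HasMinWitness (S : VDF K Γ) {I : Type u} [LinearOrder I] (a : I → K)
    (G : MvPolynomial ℕ K) : Prop :=
  ∃ (J : Type u) (lo : LinearOrder J),
    letI := lo
    WellFoundedLT J ∧ NoMaxOrder J ∧
      ∃ b : J → K, S.IsPcSeq b ∧ S.EquivPc a b ∧
        S.PcToZero (fun j => S.evalD (b j) G)

/-- `G` is a minimal differential polynomial of `(a_ρ)` over `K`: a differential
polynomial of minimal complexity such that `G(b_σ) ⇝ 0` for some pc-sequence `(b_σ)`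
equivalent to `(a_ρ)` -/
def IsMinDiffPoly (S : VDF K Γ) {I : Type u} [LinearOrder I] (a : I → K)
    (G : MvPolynomial ℕ K) : Prop :=
  G ≠ 0 ∧ S.HasMinWitness a G ∧
    ∀ H : MvPolynomial ℕ K, H ≠ 0 → S.HasMinWitness a H →
      dpComplexity G ≤ dpComplexity H

/-- `K` has the differential-henselian configuration property: `ddeg_𝒂 G = 1` for
every divergent pc-sequence `(a_ρ)` in `K` with minimal differential polynomial `G`
over `K` -/
def DhConfig (S : VDF K Γ) : Prop :=
  ∀ (I : Type u) [LinearOrder I] [WellFoundedLT I] [NoMaxOrder I] [SuccOrder I],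
    ∀ (a : I → K) (γ : I → Γ) (G : MvPolynomial ℕ K),
      S.IsPcSeq a → S.GammaEq a γ → S.Divergent a → S.IsMinDiffPoly a G →
      S.ddegCut a γ G = 1

/-- `K` is maximal: it has no proper immediate extension -/
def Maximal (S : VDF K Γ) : Prop :=
  ∀ (M : Type u) (Δ : Type u) [Field M] [AddCommGroup Δ] [LinearOrder Δ] [IsOrderedAddMonoid Δ],
    ∀ (T : VDF M Δ) (f : Hom S T), f.Immediate → Function.Surjective f.toRing

/-- `K` is differential-algebraically maximal: it has no proper immediate extension
that is differentially algebraic over `K` -/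
def DAlgMaximal (S : VDF K Γ) : Prop :=
  ∀ (M : Type u) (Δ : Type u) [Field M] [AddCommGroup Δ] [LinearOrder Δ] [IsOrderedAddMonoid Δ],
    ∀ (T : VDF M Δ) (f : Hom S T), f.Immediate → f.DAlgebraic →
      Function.Surjective f.toRing

/-- two extensions of `K` are isomorphic over `K` -/
def IsomorphicOver {L₀ : Type u} [Field L₀] {Δ₀ : Type u} [AddCommGroup Δ₀] [LinearOrder Δ₀] [IsOrderedAddMonoid Δ₀]
    {L₁ : Type u} [Field L₁] {Δ₁ : Type u} [AddCommGroup Δ₁] [LinearOrder Δ₁] [IsOrderedAddMonoid Δ₁]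
    {S : VDF K Γ} {T₀ : VDF L₀ Δ₀} {T₁ : VDF L₁ Δ₁}
    (f₀ : Hom S T₀) (f₁ : Hom S T₁) : Prop :=
  ∃ g : Hom T₀ T₁, Function.Bijective g.toRing ∧ Function.Bijective g.toGrp ∧
    g.toRing.comp f₀.toRing = f₁.toRing ∧ g.toGrp.comp f₀.toGrp = f₁.toGrp

/-- a differential-henselization of `K`: an immediate d-henselian extension of `K`
that embeds over `K` into every immediate d-henselian extension of `K` -/
def IsDHenselization {S : VDF K Γ} {T : VDF L Γ'} (f : Hom S T) : Prop :=
  f.Immediate ∧ T.DHenselian ∧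
  ∀ (M : Type u) (Δ : Type u) [Field M] [AddCommGroup Δ] [LinearOrder Δ] [IsOrderedAddMonoid Δ],
    ∀ (U : VDF M Δ) (g : Hom S U), g.Immediate → U.DHenselian →
      ∃ h : Hom T U, h.toRing.comp f.toRing = g.toRing ∧
        h.toGrp.comp f.toGrp = g.toGrp

end VDF

/-- a convex subgroup of an ordered abelian group -/
def IsConvexSubgroup {Γ : Type u} [AddCommGroup Γ] [LinearOrder Γ] [IsOrderedAddMonoid Γ] (Δ : AddSubgroup Γ) :
    Prop :=
  ∀ x ∈ Δ, ∀ y : Γ, 0 ≤ y → y ≤ x → y ∈ Δ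

/-- an ordered abelian group has finite (archimedean) rank if it has only finitely
many convex subgroups -/
def FiniteRank (Γ : Type u) [AddCommGroup Γ] [LinearOrder Γ] [IsOrderedAddMonoid Γ] : Prop :=
  {Δ : AddSubgroup Γ | IsConvexSubgroup Δ}.Finite

/-- `Γ` is the union of its finite rank convex subgroups -/
def UnionOfFiniteRank (Γ : Type u) [AddCommGroup Γ] [LinearOrder Γ] [IsOrderedAddMonoid Γ] : Prop :=
  ∀ γ : Γ, ∃ Δ : AddSubgroup Γ, IsConvexSubgroup Δ ∧ FiniteRank ↥Δ ∧ γ ∈ Δ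

/-- an ordered abelian group `Γ` has the dh-configuration property if every valued
differential field of equicharacteristic `0` with small derivation, nontrivial induced
derivation on its residue field, and value group `Γ` has the dh-configuration
property -/
def GroupDhConfig (Γ : Type u) [AddCommGroup Γ] [LinearOrder Γ] [IsOrderedAddMonoid Γ] : Prop :=
  ∀ (K : Type u) [Field K], ∀ S : VDF K Γ, S.ResidueDerNontrivial → S.DhConfig

namespace VDF

variable {K : Type u} [Field K] {Γ : Type u} [AddCommGroup Γ] [LinearOrder Γ] [IsOrderedAddMonoid Γ]

/-- the coarsening of `K` by a convex subgroup `Δ ⊆ Γ`: same field and derivation,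
valuation composed with the quotient map `Γ → Γ/Δ` (here realized abstractly by a
surjective monotone group homomorphism `p` with kernel `Δ`) -/
structure IsCoarsening (S : VDF K Γ) (Δ : AddSubgroup Γ) {Γ' : Type u}
    [AddCommGroup Γ'] [LinearOrder Γ'] [IsOrderedAddMonoid Γ'] (T : VDF K Γ') (p : Γ →+ Γ') : Prop where
  surj : Function.Surjective p
  ker : ∀ γ : Γ, p γ = 0 ↔ γ ∈ Δ
  mono : Monotone p
  same_der : T.der = S.der
  coarse_v : ∀ a : K, T.v a = WithTop.map (⇑p) (S.v a)

/-- membership in the valuation ring `𝒪̇` of the coarsening by `Δ` -/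
def InCoarseO (S : VDF K Γ) (Δ : AddSubgroup Γ) (a : K) : Prop :=
  ∃ δ ∈ Δ, (δ : WithTop Γ) ≤ S.v a

/-- membership in the maximal ideal `𝔪̇` of the coarsening by `Δ` -/
def InCoarseM (S : VDF K Γ) (Δ : AddSubgroup Γ) (a : K) : Prop :=
  ∀ δ ∈ Δ, (δ : WithTop Γ) < S.v a

/-- the specialization `K̇ = 𝒪̇/𝔪̇` of `K` to a convex subgroup `Δ`, realized
abstractly: `π : 𝒪̇ → K̇` is the residue map and `e` identifies the value group of
`K̇` with `Δ` -/
structure IsSpecialization (S : VDF K Γ) (Δ : AddSubgroup Γ) {K' : Type u} [Field K']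
    {Γ'' : Type u} [AddCommGroup Γ''] [LinearOrder Γ''] [IsOrderedAddMonoid Γ''] (T : VDF K' Γ'') (π : K → K')
    (e : Γ'' →+ Γ) : Prop where
  e_strictMono : StrictMono e
  e_range : ∀ γ : Γ, γ ∈ Δ ↔ ∃ δ : Γ'', e δ = γ
  map_one : π 1 = 1
  map_add : ∀ a b : K, S.InCoarseO Δ a → S.InCoarseO Δ b → π (a + b) = π a + π b
  map_mul : ∀ a b : K, S.InCoarseO Δ a → S.InCoarseO Δ b → π (a * b) = π a * π b
  map_zero_iff : ∀ a : K, S.InCoarseO Δ a → (π a = 0 ↔ S.InCoarseM Δ a)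
  surj : ∀ x : K', ∃ a : K, S.InCoarseO Δ a ∧ π a = x
  map_der : ∀ a : K, S.InCoarseO Δ a → π (S.der a) = T.der (π a)
  map_v : ∀ (a : K) (δ : Γ''), S.InCoarseO Δ a →
    S.v a = ((e δ : Γ) : WithTop Γ) → T.v (π a) = (δ : WithTop Γ'')

end VDF

/-- a sequence of values `(γ_ρ)` is `Δ`-fluent: eventually `γ_{ρ'} - γ_ρ > Δ` -/
def DeltaFluent {Γ : Type u} [AddCommGroup Γ] [LinearOrder Γ] [IsOrderedAddMonoid Γ] (Δ : AddSubgroup Γ)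
    {I : Type u} [LinearOrder I] (γ : I → Γ) : Prop :=
  ∃ i₀ : I, ∀ i j : I, i₀ < i → i < j → ∀ δ ∈ Δ, δ < γ j - γ i

/-! ### Auxiliary development for statement7 -/

section Statement7Aux

open Finset MvPolynomial

namespace VDF

variable {K Γ : Type u} [Field K] [AddCommGroup Γ] [LinearOrder Γ] [IsOrderedAddMonoid Γ]

lemma v_zero (S : VDF K Γ) : S.v 0 = ⊤ := (S.v_eq_top_iff 0).2 rfl

lemma v_ne_top (S : VDF K Γ) {a : K} (ha : a ≠ 0) : S.v a ≠ ⊤ :=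
  fun h => ha ((S.v_eq_top_iff a).1 h)

lemma v_one (S : VDF K Γ) : S.v 1 = 0 := by
  have h := S.v_mul 1 1
  rw [one_mul] at h
  obtain ⟨γ, hγ⟩ := WithTop.ne_top_iff_exists.1 (S.v_ne_top one_ne_zero)
  rw [← hγ, ← WithTop.coe_add] at h
  have hγ0 : γ = γ + γ := by exact_mod_cast h
  have : γ = 0 := by
    have := add_left_cancel (a := γ) (b := (0:Γ)) (c := γ) (by rw [add_zero]; exact hγ0)
    exact this.symm
  rw [← hγ, this]; rfl

lemma v_neg (S : VDF K Γ) (a : K) : S.v (-a) = S.v a := by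
  have h1 : S.v (-1 : K) = 0 := by
    have h := S.v_mul (-1 : K) (-1 : K)
    rw [neg_mul_neg, one_mul, S.v_one] at h
    obtain ⟨γ, hγ⟩ := WithTop.ne_top_iff_exists.1 (S.v_ne_top (neg_ne_zero.2 (one_ne_zero (α := K))))
    rw [← hγ, ← WithTop.coe_add] at h
    have h0 : γ + γ = 0 := by exact_mod_cast h.symm
    rcases lt_trichotomy γ 0 with hlt | he | hgt
    · exact absurd h0 (by have := add_lt_add hlt hlt; rw [add_zero] at this; exact ne_of_lt this)
    · rw [← hγ, he]; rfl
    · exact absurd h0 (by have := add_lt_add hgt hgt; rw [add_zero] at this; exact ne_of_gt this)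
  have hm := S.v_mul (-1 : K) a
  rw [neg_one_mul] at hm
  rw [hm, h1, zero_add]

lemma v_sub_min (S : VDF K Γ) (a b : K) : min (S.v a) (S.v b) ≤ S.v (a - b) := by
  rw [sub_eq_add_neg]
  calc min (S.v a) (S.v b) = min (S.v a) (S.v (-b)) := by rw [S.v_neg]
    _ ≤ S.v (a + -b) := S.v_add a (-b)

lemma v_inv_coe (S : VDF K Γ) {a : K} {γ : Γ} (ha : a ≠ 0) (hγ : S.v a = (γ : WithTop Γ)) :
    S.v a⁻¹ = ((-γ : Γ) : WithTop Γ) := by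
  have h := S.v_mul a a⁻¹
  rw [mul_inv_cancel₀ ha, S.v_one, hγ] at h
  obtain ⟨μ, hμ⟩ := WithTop.ne_top_iff_exists.1 (S.v_ne_top (inv_ne_zero ha))
  rw [← hμ, ← WithTop.coe_add] at h
  have h0 : γ + μ = 0 := by exact_mod_cast h.symm
  have : μ = -γ := eq_neg_of_add_eq_zero_left (by rw [add_comm]; exact h0)
  rw [← hμ, this]

lemma der_zero (S : VDF K Γ) : S.der 0 = 0 := by
  have h := S.der_add 0 0
  rw [add_zero] at h
  exact (left_eq_add.1 h)

lemma der_one (S : VDF K Γ) : S.der 1 = 0 := by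
  have h := S.der_mul 1 1
  simp only [mul_one, one_mul] at h
  exact left_eq_add.1 h

lemma der_neg (S : VDF K Γ) (a : K) : S.der (-a) = -S.der a := by
  have h := S.der_add a (-a)
  rw [add_neg_cancel, S.der_zero] at h
  exact eq_neg_of_add_eq_zero_right h.symm

lemma der_natCast (S : VDF K Γ) (n : ℕ) : S.der (n : K) = 0 := by
  induction n with
  | zero => exact_mod_cast S.der_zero
  | succ n ih =>
    push_cast
    rw [S.der_add, ih, S.der_one, add_zero]

/-- `S.der` as an additive monoid hom. -/
def derAdd (S : VDF K Γ) : K →+ K where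
  toFun := S.der
  map_zero' := S.der_zero
  map_add' := S.der_add

lemma derIter_zero (S : VDF K Γ) (n : ℕ) : S.der^[n] (0 : K) = 0 := by
  induction n with
  | zero => rfl
  | succ n ih => rw [Function.iterate_succ_apply, S.der_zero, ih]

lemma derIter_one (S : VDF K Γ) {n : ℕ} (hn : n ≠ 0) : S.der^[n] (1 : K) = 0 := by
  obtain ⟨m, rfl⟩ := Nat.exists_eq_succ_of_ne_zero hn
  rw [Function.iterate_succ_apply, S.der_one, S.derIter_zero]

lemma derIter_neg (S : VDF K Γ) (a : K) (n : ℕ) : S.der^[n] (-a) = -S.der^[n] a := by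
  induction n with
  | zero => rfl
  | succ n ih => rw [Function.iterate_succ_apply', Function.iterate_succ_apply', ih, S.der_neg]

/-- Higher Leibniz rule. -/
lemma iter_der_mul (S : VDF K Γ) (p q : K) (n : ℕ) :
    S.der^[n] (p * q) = ∑ k ∈ Finset.range (n + 1),
      (n.choose k : K) * (S.der^[n - k] p * S.der^[k] q) := by
  induction n with
  | zero => simp
  | succ n IH =>
    have step : S.der^[n + 1] (p * q)
        = ∑ k ∈ Finset.range (n + 1), ((n.choose k : K) * (S.der^[n - k + 1] p * S.der^[k] q)
            + (n.choose k : K) * (S.der^[n - k] p * S.der^[k + 1] q)) := by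
      rw [Function.iterate_succ_apply', IH,
        show S.der (∑ k ∈ Finset.range (n + 1),
            (n.choose k : K) * (S.der^[n - k] p * S.der^[k] q))
          = ∑ k ∈ Finset.range (n + 1),
            S.der ((n.choose k : K) * (S.der^[n - k] p * S.der^[k] q)) from
          map_sum S.derAdd _ _]
      refine Finset.sum_congr rfl fun k _ => ?_
      rw [S.der_mul, S.der_natCast, S.der_mul,
        Function.iterate_succ_apply' S.der (n - k) p, Function.iterate_succ_apply' S.der k q]
      ring
    have target : ∑ k ∈ Finset.range (n + 2), ((n + 1).choose k : K) *
          (S.der^[n + 1 - k] p * S.der^[k] q)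
        = (∑ k ∈ Finset.range (n + 1), (n.choose k : K) * (S.der^[n - k + 1] p * S.der^[k] q))
          + ∑ k ∈ Finset.range (n + 1), (n.choose k : K) * (S.der^[n - k] p * S.der^[k + 1] q) := by
      rw [Finset.sum_range_succ' (fun k => ((n + 1).choose k : K) *
        (S.der^[n + 1 - k] p * S.der^[k] q)) (n + 1)]
      have hsplit : ∀ k ∈ Finset.range (n + 1),
          ((n + 1).choose (k + 1) : K) * (S.der^[n + 1 - (k + 1)] p * S.der^[k + 1] q)
          = (n.choose k : K) * (S.der^[n - k] p * S.der^[k + 1] q)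
            + (n.choose (k + 1) : K) * (S.der^[n - k] p * S.der^[k + 1] q) := by
        intro k _
        have h1 : n + 1 - (k + 1) = n - k := by omega
        rw [h1, Nat.choose_succ_succ, Nat.cast_add, add_mul]
      rw [Finset.sum_congr rfl hsplit, Finset.sum_add_distrib]
      have hA : ∑ k ∈ Finset.range (n + 1), (n.choose k : K) * (S.der^[n - k + 1] p * S.der^[k] q)
          = (∑ k ∈ Finset.range (n + 1), (n.choose (k + 1) : K) *
              (S.der^[n - k] p * S.der^[k + 1] q))
            + ((n + 1).choose 0 : K) * (S.der^[n + 1 - 0] p * S.der^[0] q) := by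
        rw [Finset.sum_range_succ' (fun k => (n.choose k : K) *
          (S.der^[n - k + 1] p * S.der^[k] q)) n]
        congr 1
        · rw [Finset.sum_range_succ, Nat.choose_succ_self, Nat.cast_zero, zero_mul, add_zero]
          refine Finset.sum_congr rfl fun k hk => ?_
          have h2 : n - (k + 1) + 1 = n - k := by
            have := Finset.mem_range.1 hk; omega
          rw [h2]
        · simp
      rw [hA]; ring
    rw [step, Finset.sum_add_distrib, target]

section Coarse

variable (S : VDF K Γ) (Δ : AddSubgroup Γ)

/-- The valuation ring `𝒪̇` of the coarsening, as a subring of `K`. -/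
def cO : Subring K where
  carrier := {a | S.InCoarseO Δ a}
  zero_mem' := ⟨0, Δ.zero_mem, by rw [S.v_zero]; exact le_top⟩
  one_mem' := ⟨0, Δ.zero_mem, le_of_eq (by rw [S.v_one]; rfl)⟩
  add_mem' := by
    rintro a b ⟨δ₁, h₁, l₁⟩ ⟨δ₂, h₂, l₂⟩
    refine ⟨min δ₁ δ₂, ?_, ?_⟩
    · rcases le_total δ₁ δ₂ with h | h
      · rwa [min_eq_left h]
      · rwa [min_eq_right h]
    · calc ((min δ₁ δ₂ : Γ) : WithTop Γ) = min (δ₁ : WithTop Γ) (δ₂ : WithTop Γ) :=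
          WithTop.coe_min δ₁ δ₂
        _ ≤ min (S.v a) (S.v b) := min_le_min l₁ l₂
        _ ≤ S.v (a + b) := S.v_add a b
  neg_mem' := by
    rintro a ⟨δ, hδ, l⟩
    exact ⟨δ, hδ, by rwa [S.v_neg]⟩
  mul_mem' := by
    rintro a b ⟨δ₁, h₁, l₁⟩ ⟨δ₂, h₂, l₂⟩
    refine ⟨δ₁ + δ₂, add_mem h₁ h₂, ?_⟩
    rw [S.v_mul, WithTop.coe_add]
    exact add_le_add l₁ l₂

variable {S Δ}

lemma mem_cO {a : K} : a ∈ cO S Δ ↔ S.InCoarseO Δ a := Iff.rfl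

lemma M_zero : S.InCoarseM Δ 0 := fun δ _ => by
  rw [S.v_zero]; exact WithTop.coe_lt_top δ

lemma O_of_M {a : K} (h : S.InCoarseM Δ a) : S.InCoarseO Δ a :=
  ⟨0, Δ.zero_mem, le_of_lt (h 0 Δ.zero_mem)⟩

lemma ne_zero_of_not_M {a : K} (h : ¬ S.InCoarseM Δ a) : a ≠ 0 :=
  fun h0 => h (h0 ▸ M_zero)

lemma neg_O {a : K} (ha : S.InCoarseO Δ a) : S.InCoarseO Δ (-a) := by
  obtain ⟨δ, hδ, hle⟩ := ha
  exact ⟨δ, hδ, by rwa [S.v_neg]⟩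

lemma not_M_iff {a : K} : ¬ S.InCoarseM Δ a ↔ ∃ δ ∈ Δ, S.v a ≤ (δ : WithTop Γ) := by
  simp only [InCoarseM, not_forall, not_lt, exists_prop]

lemma M_add {a b : K} (ha : S.InCoarseM Δ a) (hb : S.InCoarseM Δ b) :
    S.InCoarseM Δ (a + b) := fun δ hδ =>
  lt_of_lt_of_le (lt_min (ha δ hδ) (hb δ hδ)) (S.v_add a b)

lemma M_mul_O {a b : K} (ha : S.InCoarseM Δ a) (hb : S.InCoarseO Δ b) :
    S.InCoarseM Δ (a * b) := by
  intro δ hδ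
  obtain ⟨δ₂, hδ₂, hle⟩ := hb
  by_cases hb0 : b = 0
  · rw [hb0, mul_zero, S.v_zero]; exact WithTop.coe_lt_top δ
  obtain ⟨γ₂, hγ₂⟩ := WithTop.ne_top_iff_exists.1 (S.v_ne_top hb0)
  have hδγ : δ₂ ≤ γ₂ := by exact_mod_cast hγ₂ ▸ hle
  have h1 : ((δ - γ₂ : Γ) : WithTop Γ) < S.v a := by
    refine lt_of_le_of_lt ?_ (ha (δ - δ₂) (sub_mem hδ hδ₂))
    exact_mod_cast sub_le_sub_left hδγ δ
  rw [S.v_mul, ← hγ₂]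
  have := WithTop.add_lt_add_right (WithTop.coe_ne_top (a := γ₂)) h1
  calc (δ : WithTop Γ) = ((δ - γ₂ : Γ) : WithTop Γ) + (γ₂ : WithTop Γ) := by
        rw [← WithTop.coe_add, sub_add_cancel]
    _ < S.v a + (γ₂ : WithTop Γ) := this

lemma v_mem_of_O_not_M (hconv : IsConvexSubgroup Δ) {a : K}
    (ha : S.InCoarseO Δ a) (hm : ¬ S.InCoarseM Δ a) :
    ∃ γ ∈ Δ, S.v a = (γ : WithTop Γ) := by
  obtain ⟨δ₁, h₁, l₁⟩ := ha
  obtain ⟨δ₂, h₂, l₂⟩ := not_M_iff.1 hm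
  have hne : S.v a ≠ ⊤ := fun h => by
    rw [h] at l₂; exact WithTop.coe_ne_top (top_le_iff.1 l₂)
  obtain ⟨γ, hγ⟩ := WithTop.ne_top_iff_exists.1 hne
  refine ⟨γ, ?_, hγ.symm⟩
  have hl : δ₁ ≤ γ := by exact_mod_cast hγ ▸ l₁
  have hu : γ ≤ δ₂ := by exact_mod_cast hγ ▸ l₂
  rcases le_total 0 γ with h0 | h0
  · exact hconv δ₂ h₂ γ h0 hu
  · have : -γ ∈ Δ := hconv (-δ₁) (neg_mem h₁) (-γ) (neg_nonneg.2 h0) (neg_le_neg hl)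
    simpa using neg_mem this

lemma der_v_nonneg (S : VDF K Γ) {a : K} (ha : 0 ≤ S.v a) : 0 ≤ S.v (S.der a) := by
  by_contra hlt
  push_neg at hlt
  have hda : S.der a ≠ 0 := by
    intro h0
    rw [h0, S.v_zero] at hlt
    exact (not_top_lt) hlt
  obtain ⟨γ, hγ⟩ := WithTop.ne_top_iff_exists.1 (S.v_ne_top hda)
  have hγneg : γ < 0 := by
    have : S.v (S.der a) < ((0 : Γ) : WithTop Γ) := hlt
    rw [← hγ] at this; exact_mod_cast this
  obtain ⟨b, hb⟩ := S.v_surjective (-γ)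
  have hb0 : b ≠ 0 := fun h => by
    rw [h, S.v_zero] at hb; exact (WithTop.coe_ne_top (a := -γ)) hb.symm
  have hbpos : 0 < S.v b := by
    rw [hb]
    exact_mod_cast neg_pos.2 hγneg
  have hab : 0 < S.v (a * b) := by
    rw [S.v_mul]
    calc (0 : WithTop Γ) < S.v b := hbpos
      _ = 0 + S.v b := (zero_add _).symm
      _ ≤ S.v a + S.v b := add_le_add_left ha _
  have h1 := S.small_der _ hab
  rw [S.der_mul] at h1
  have h2 : 0 < S.v (a * S.der b) := by
    rw [S.v_mul]
    calc (0 : WithTop Γ) < S.v (S.der b) := S.small_der b hbpos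
      _ = 0 + S.v (S.der b) := (zero_add _).symm
      _ ≤ S.v a + S.v (S.der b) := add_le_add_left ha _
  have h3 : 0 < S.v (S.der a * b) := by
    have heq : S.der a * b = (a * S.der b + S.der a * b) - a * S.der b := by ring
    rw [heq]
    exact lt_of_lt_of_le (lt_min h1 h2) (S.v_sub_min _ _)
  rw [S.v_mul, hγ.symm, hb, ← WithTop.coe_add, add_neg_cancel] at h3
  exact lt_irrefl _ h3

lemma der_M {a : K} (ha : S.InCoarseM Δ a) : S.InCoarseM Δ (S.der a) := by
  intro δ hδ
  set δ' := max δ 0 with hδ'def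
  have hδ' : δ' ∈ Δ := by
    rcases le_total δ 0 with h | h
    · rw [hδ'def, max_eq_right h]; exact Δ.zero_mem
    · rwa [hδ'def, max_eq_left h]
  have hδ'0 : (0:Γ) ≤ δ' := le_max_right δ 0
  suffices h : (δ' : WithTop Γ) < S.v (S.der a) from
    lt_of_le_of_lt (by exact_mod_cast le_max_left δ 0) h
  obtain ⟨d, hd⟩ := S.v_surjective δ'
  have hd0 : d ≠ 0 := fun h => by
    rw [h, S.v_zero] at hd; exact (WithTop.coe_ne_top (a := δ')) hd.symm
  have hdinv : S.v d⁻¹ = ((-δ' : Γ) : WithTop Γ) := S.v_inv_coe hd0 hd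
  have hc : S.v (a * d⁻¹) = S.v a + ((-δ' : Γ) : WithTop Γ) := by rw [S.v_mul, hdinv]
  have hcpos : 0 < S.v (a * d⁻¹) := by
    rw [hc]
    have h1 := ha δ' hδ'
    calc (0 : WithTop Γ) = (δ' : WithTop Γ) + ((-δ' : Γ) : WithTop Γ) := by
          rw [← WithTop.coe_add, add_neg_cancel]; rfl
      _ < S.v a + ((-δ' : Γ) : WithTop Γ) :=
          WithTop.add_lt_add_right (WithTop.coe_ne_top (a := -δ')) h1
  have hcd : a = a * d⁻¹ * d := by rw [mul_assoc, inv_mul_cancel₀ hd0, mul_one]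
  have hda : S.der a = a * d⁻¹ * S.der d + S.der (a * d⁻¹) * d := by
    conv_lhs => rw [hcd]
    exact S.der_mul _ _
  have h1 : (δ' : WithTop Γ) < S.v (S.der (a * d⁻¹) * d) := by
    rw [S.v_mul, hd]
    have h2 := S.small_der _ hcpos
    calc (δ' : WithTop Γ) = 0 + (δ' : WithTop Γ) := (zero_add _).symm
      _ < S.v (S.der (a * d⁻¹)) + (δ' : WithTop Γ) :=
          WithTop.add_lt_add_right (WithTop.coe_ne_top (a := δ')) h2
  have h2 : (δ' : WithTop Γ) < S.v (a * d⁻¹ * S.der d) := by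
    rw [S.v_mul]
    have hdd : 0 ≤ S.v (S.der d) := S.der_v_nonneg (by rw [hd]; exact_mod_cast hδ'0)
    have hcgt : (δ' : WithTop Γ) < S.v (a * d⁻¹) := by
      rw [hc]
      have h3 := ha (δ' + δ') (add_mem hδ' hδ')
      calc (δ' : WithTop Γ) = ((δ' + δ' : Γ) : WithTop Γ) + ((-δ' : Γ) : WithTop Γ) := by
            rw [← WithTop.coe_add]; congr 1; abel
        _ < S.v a + ((-δ' : Γ) : WithTop Γ) :=
            WithTop.add_lt_add_right (WithTop.coe_ne_top (a := -δ')) h3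
    calc (δ' : WithTop Γ) < S.v (a * d⁻¹) := hcgt
      _ = S.v (a * d⁻¹) + 0 := (add_zero _).symm
      _ ≤ S.v (a * d⁻¹) + S.v (S.der d) := add_le_add_right hdd _
  rw [hda]
  exact lt_of_lt_of_le (lt_min h2 h1) (S.v_add _ _)

lemma der_O {a : K} (ha : S.InCoarseO Δ a) : S.InCoarseO Δ (S.der a) := by
  obtain ⟨δ, hδ, hle⟩ := ha
  set δ'' := min δ 0 with hδ''def
  have hδ'' : δ'' ∈ Δ := by
    rcases le_total δ 0 with h | h
    · rwa [hδ''def, min_eq_left h]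
    · rw [hδ''def, min_eq_right h]; exact Δ.zero_mem
  have hδ''0 : δ'' ≤ 0 := min_le_right δ 0
  have hle'' : (δ'' : WithTop Γ) ≤ S.v a :=
    le_trans (by exact_mod_cast min_le_left δ 0) hle
  obtain ⟨d, hd⟩ := S.v_surjective δ''
  have hd0 : d ≠ 0 := fun h => by
    rw [h, S.v_zero] at hd; exact (WithTop.coe_ne_top (a := δ'')) hd.symm
  have hdinv : S.v d⁻¹ = ((-δ'' : Γ) : WithTop Γ) := S.v_inv_coe hd0 hd
  have hc : 0 ≤ S.v (a * d⁻¹) := by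
    rw [S.v_mul, hdinv]
    calc (0 : WithTop Γ) = (δ'' : WithTop Γ) + ((-δ'' : Γ) : WithTop Γ) := by
          rw [← WithTop.coe_add, add_neg_cancel]; rfl
      _ ≤ S.v a + ((-δ'' : Γ) : WithTop Γ) := add_le_add_left hle'' _
  have hderc : 0 ≤ S.v (S.der (a * d⁻¹)) := S.der_v_nonneg hc
  have hderdinv : 0 ≤ S.v (S.der d⁻¹) :=
    S.der_v_nonneg (by rw [hdinv]; exact_mod_cast neg_nonneg.2 hδ''0)
  -- bound v (der d)
  have hderd : ((δ'' + δ'' : Γ) : WithTop Γ) ≤ S.v (S.der d) := by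
    have h0 : S.der (d * d⁻¹) = 0 := by rw [mul_inv_cancel₀ hd0, S.der_one]
    rw [S.der_mul] at h0
    have h2 : S.der d * d⁻¹ = -(d * S.der d⁻¹) := eq_neg_of_add_eq_zero_right h0
    have h3 : S.der d = -(d * S.der d⁻¹) * d := by
      rw [← h2, mul_assoc, inv_mul_cancel₀ hd0, mul_one]
    rw [h3, S.v_mul, S.v_neg, S.v_mul, hd, WithTop.coe_add]
    calc (δ'' : WithTop Γ) + (δ'' : WithTop Γ)
        = ((δ'' : WithTop Γ) + 0) + (δ'' : WithTop Γ) := by rw [add_zero]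
      _ ≤ ((δ'' : WithTop Γ) + S.v (S.der d⁻¹)) + (δ'' : WithTop Γ) :=
          add_le_add_left (add_le_add_right hderdinv _) _
  have hcd : a = a * d⁻¹ * d := by rw [mul_assoc, inv_mul_cancel₀ hd0, mul_one]
  have hda : S.der a = a * d⁻¹ * S.der d + S.der (a * d⁻¹) * d := by
    conv_lhs => rw [hcd]
    exact S.der_mul _ _
  refine ⟨δ'' + δ'', add_mem hδ'' hδ'', ?_⟩
  have h1 : ((δ'' + δ'' : Γ) : WithTop Γ) ≤ S.v (a * d⁻¹ * S.der d) := by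
    rw [S.v_mul]
    calc ((δ'' + δ'' : Γ) : WithTop Γ) = 0 + ((δ'' + δ'' : Γ) : WithTop Γ) := (zero_add _).symm
      _ ≤ S.v (a * d⁻¹) + S.v (S.der d) := add_le_add hc hderd
  have h2 : ((δ'' + δ'' : Γ) : WithTop Γ) ≤ S.v (S.der (a * d⁻¹) * d) := by
    rw [S.v_mul, hd]
    calc ((δ'' + δ'' : Γ) : WithTop Γ) ≤ ((0 + δ'' : Γ) : WithTop Γ) := by
          exact_mod_cast add_le_add_left hδ''0 δ''
      _ = 0 + (δ'' : WithTop Γ) := by rw [WithTop.coe_add]; rfl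
      _ ≤ S.v (S.der (a * d⁻¹)) + (δ'' : WithTop Γ) := add_le_add_left hderc _
  rw [hda]
  exact le_trans (le_min h1 h2) (S.v_add _ _)

lemma derIter_O {a : K} (ha : S.InCoarseO Δ a) (n : ℕ) : S.InCoarseO Δ (S.der^[n] a) := by
  induction n with
  | zero => exact ha
  | succ n ih => rw [Function.iterate_succ_apply']; exact der_O ih

end Coarse

section Poly

variable {S : VDF K Γ} {Δ : AddSubgroup Γ}

/-- Polynomials with coefficients in `𝒪̇`. -/
def OP (S : VDF K Γ) (Δ : AddSubgroup Γ) : Subring (MvPolynomial ℕ K) where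
  carrier := {Q | ∀ m, Q.coeff m ∈ cO S Δ}
  zero_mem' := fun m => by rw [coeff_zero]; exact zero_mem _
  one_mem' := fun m => by
    classical
    rw [coeff_one]
    split_ifs
    · exact one_mem _
    · exact zero_mem _
  add_mem' := fun ha hb m => by rw [coeff_add]; exact add_mem (ha m) (hb m)
  neg_mem' := fun ha m => by rw [coeff_neg]; exact neg_mem (ha m)
  mul_mem' := fun {p q} hp hq m => by
    classical
    rw [coeff_mul]
    exact sum_mem fun x _ => mul_mem (hp x.1) (hq x.2)

lemma C_mem_OP {c : K} (h : c ∈ cO S Δ) : (MvPolynomial.C c : MvPolynomial ℕ K) ∈ OP S Δ := by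
  intro m
  classical
  rw [coeff_C]
  split_ifs
  · exact h
  · exact zero_mem _

lemma X_mem_OP (i : ℕ) : (MvPolynomial.X i : MvPolynomial ℕ K) ∈ OP S Δ := by
  intro m
  classical
  rw [coeff_X']
  split_ifs
  · exact one_mem _
  · exact zero_mem _

lemma bind_M {g : ℕ → MvPolynomial ℕ K} (hg : ∀ i, g i ∈ OP S Δ)
    {Q : MvPolynomial ℕ K} (hQ : ∀ m, S.InCoarseM Δ (Q.coeff m)) (n : ℕ →₀ ℕ) :
    S.InCoarseM Δ ((MvPolynomial.bind₁ g Q).coeff n) := by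
  classical
  have hQs : MvPolynomial.bind₁ g Q
      = ∑ m ∈ Q.support, MvPolynomial.C (Q.coeff m) * ∏ i ∈ m.support, g i ^ m i := by
    conv_lhs => rw [← support_sum_monomial_coeff Q]
    rw [map_sum]
    exact Finset.sum_congr rfl fun m _ => bind₁_monomial g m _
  rw [hQs, coeff_sum]
  refine Finset.sum_induction _ (fun x => S.InCoarseM Δ x) (fun a b => M_add) M_zero ?_
  intro m _
  rw [coeff_C_mul]
  exact M_mul_O (hQ m) ((prod_mem (fun i _ => pow_mem (hg i) (m i)) : _ ∈ OP S Δ) n)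

end Poly

section Conj

variable {S : VDF K Γ} {Δ : AddSubgroup Γ}

lemma addConj_neg_addConj (S : VDF K Γ) (b : K) (P : MvPolynomial ℕ K) :
    S.addConj (-b) (S.addConj b P) = P := by
  rw [VDF.addConj, VDF.addConj, bind₁_bind₁]
  have hkey : (fun i => MvPolynomial.bind₁
      (fun j => MvPolynomial.C (S.der^[j] (-b)) + MvPolynomial.X j)
      (MvPolynomial.C (S.der^[i] b) + MvPolynomial.X i))
      = (MvPolynomial.X : ℕ → MvPolynomial ℕ K) := by
    funext i
    rw [map_add, bind₁_C_right, bind₁_X_right, S.derIter_neg, map_neg, add_neg_cancel_left]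
  rw [hkey]
  simp [bind₁_X_left]

lemma mulConj_inv_mulConj (S : VDF K Γ) {h : K} (hne : h ≠ 0) (P : MvPolynomial ℕ K) :
    S.mulConj h⁻¹ (S.mulConj h P) = P := by
  classical
  rw [VDF.mulConj, VDF.mulConj, bind₁_bind₁]
  have hkey : (fun i => MvPolynomial.bind₁
      (fun i' => ∑ k ∈ Finset.range (i' + 1),
        MvPolynomial.C ((i'.choose k : K) * S.der^[i' - k] h⁻¹) * MvPolynomial.X k)
      (∑ j ∈ Finset.range (i + 1),
        MvPolynomial.C ((i.choose j : K) * S.der^[i - j] h) * MvPolynomial.X j))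
      = (MvPolynomial.X : ℕ → MvPolynomial ℕ K) := by
    funext i
    rw [map_sum]
    have hterm : ∀ j ∈ Finset.range (i + 1), MvPolynomial.bind₁
        (fun i' => ∑ k ∈ Finset.range (i' + 1),
          MvPolynomial.C ((i'.choose k : K) * S.der^[i' - k] h⁻¹) * MvPolynomial.X k)
        (MvPolynomial.C ((i.choose j : K) * S.der^[i - j] h) * MvPolynomial.X j)
        = ∑ k ∈ Finset.range (i + 1),
            (if k ≤ j then MvPolynomial.C ((i.choose j : K) * S.der^[i - j] h *
              ((j.choose k : K) * S.der^[j - k] h⁻¹)) * MvPolynomial.X k else 0) := by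
      intro j hj
      rw [map_mul, bind₁_C_right, bind₁_X_right, Finset.mul_sum]
      have hfilter : Finset.range (j + 1)
          = Finset.filter (fun k => k ≤ j) (Finset.range (i + 1)) := by
        ext k
        simp only [Finset.mem_range, Finset.mem_filter]
        have := Finset.mem_range.1 hj
        omega
      rw [show ∀ (F : ℕ → MvPolynomial ℕ K), ∑ k ∈ Finset.range (j + 1), F k
          = ∑ k ∈ Finset.filter (fun k => k ≤ j) (Finset.range (i + 1)), F k from
          fun F => by rw [hfilter], Finset.sum_filter]
      refine Finset.sum_congr rfl fun k _ => ?_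
      split_ifs
      · rw [← mul_assoc, ← C_mul]
      · rfl
    rw [Finset.sum_congr rfl hterm, Finset.sum_comm]
    have hinner : ∀ k ∈ Finset.range (i + 1),
        (∑ j ∈ Finset.range (i + 1),
          (if k ≤ j then MvPolynomial.C ((i.choose j : K) * S.der^[i - j] h *
            ((j.choose k : K) * S.der^[j - k] h⁻¹)) * MvPolynomial.X k else 0))
        = (if k = i then MvPolynomial.X i else 0) := by
      intro k hk
      have hki : k ≤ i := Nat.lt_succ_iff.1 (Finset.mem_range.1 hk)
      have hscal : ∑ j ∈ Finset.range (i + 1),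
          (if k ≤ j then (i.choose j : K) * S.der^[i - j] h *
            ((j.choose k : K) * S.der^[j - k] h⁻¹) else 0)
          = if k = i then 1 else 0 := by
        have hfilt2 : Finset.filter (fun j => k ≤ j) (Finset.range (i + 1))
            = Finset.Ico k (i + 1) := by
          ext j
          simp only [Finset.mem_range, Finset.mem_filter, Finset.mem_Ico]
          omega
        rw [← Finset.sum_filter, hfilt2, Finset.sum_Ico_eq_sum_range]
        have hik : i + 1 - k = (i - k) + 1 := by omega
        rw [hik]
        have hterm2 : ∀ l ∈ Finset.range ((i - k) + 1),
            (i.choose (k + l) : K) * S.der^[i - (k + l)] h *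
              (((k + l).choose k : K) * S.der^[(k + l) - k] h⁻¹)
            = (i.choose k : K) * (((i - k).choose l : K) *
              (S.der^[(i - k) - l] h * S.der^[l] h⁻¹)) := by
          intro l hl
          have hlik : l ≤ i - k := Nat.lt_succ_iff.1 (Finset.mem_range.1 hl)
          have hchoose : i.choose (k + l) * (k + l).choose k
              = i.choose k * (i - k).choose (k + l - k) :=
            Nat.choose_mul (by omega)
          have h1 : i - (k + l) = (i - k) - l := by omega
          have h2 : (k + l) - k = l := by omega
          rw [h1, h2]
          have := congrArg (fun n : ℕ => (n : K)) hchoose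
          push_cast at this
          rw [h2] at this
          calc (i.choose (k + l) : K) * S.der^[(i-k) - l] h *
                (((k + l).choose k : K) * S.der^[l] h⁻¹)
              = ((i.choose (k + l) : K) * ((k + l).choose k : K)) *
                (S.der^[(i-k) - l] h * S.der^[l] h⁻¹) := by ring
            _ = ((i.choose k : K) * ((i - k).choose l : K)) *
                (S.der^[(i-k) - l] h * S.der^[l] h⁻¹) := by rw [this]
            _ = (i.choose k : K) * (((i - k).choose l : K) *
                (S.der^[(i - k) - l] h * S.der^[l] h⁻¹)) := by ring
        rw [Finset.sum_congr rfl hterm2, ← Finset.mul_sum]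
        have hleib : ∑ l ∈ Finset.range ((i - k) + 1), ((i - k).choose l : K) *
            (S.der^[(i - k) - l] h * S.der^[l] h⁻¹) = S.der^[i - k] (h * h⁻¹) :=
          (S.iter_der_mul h h⁻¹ (i - k)).symm
        rw [hleib, mul_inv_cancel₀ hne]
        rcases eq_or_ne k i with hk' | hk'
        · have : i - k = 0 := by omega
          rw [this, if_pos hk']
          simp [hk']
        · have : i - k ≠ 0 := by omega
          rw [S.derIter_one this, mul_zero, if_neg hk']
      calc (∑ j ∈ Finset.range (i + 1),
            (if k ≤ j then MvPolynomial.C ((i.choose j : K) * S.der^[i - j] h *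
              ((j.choose k : K) * S.der^[j - k] h⁻¹)) * MvPolynomial.X k else 0))
          = (∑ j ∈ Finset.range (i + 1),
            MvPolynomial.C (if k ≤ j then (i.choose j : K) * S.der^[i - j] h *
              ((j.choose k : K) * S.der^[j - k] h⁻¹) else 0)) * MvPolynomial.X k := by
            rw [Finset.sum_mul]
            refine Finset.sum_congr rfl fun j _ => ?_
            split_ifs
            · rfl
            · rw [map_zero, zero_mul]
        _ = MvPolynomial.C (∑ j ∈ Finset.range (i + 1),
            (if k ≤ j then (i.choose j : K) * S.der^[i - j] h *
              ((j.choose k : K) * S.der^[j - k] h⁻¹) else 0)) * MvPolynomial.X k := by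
            rw [map_sum]
        _ = MvPolynomial.C (if k = i then (1:K) else 0) * MvPolynomial.X k := by rw [hscal]
        _ = (if k = i then MvPolynomial.X i else 0) := by
            split_ifs with hk'
            · rw [hk', map_one, one_mul]
            · rw [map_zero, zero_mul]
    rw [Finset.sum_congr rfl hinner, Finset.sum_ite_eq' (Finset.range (i + 1)) i]
    rw [if_pos (Finset.mem_range.2 (Nat.lt_succ_self i))]
  rw [hkey]
  simp [bind₁_X_left]

end Conj

end VDF

end Statement7Aux
section Statement7Main

open Finset MvPolynomial

namespace VDF

variable {K Γ : Type u} [Field K] [AddCommGroup Γ] [LinearOrder Γ] [IsOrderedAddMonoid Γ]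
variable {K' Γ'' : Type u} [Field K'] [AddCommGroup Γ''] [LinearOrder Γ''] [IsOrderedAddMonoid Γ'']
variable {S : VDF K Γ} {Δ : AddSubgroup Γ} {T : VDF K' Γ''} {π : K → K'} {e : Γ'' →+ Γ}

lemma pi_zero (hs : IsSpecialization S Δ T π e) : π 0 = 0 :=
  (hs.map_zero_iff 0 (zero_mem (cO S Δ))).2 M_zero

/-- the residue map as a ring hom on `𝒪̇` -/
def specHom (hs : IsSpecialization S Δ T π e) : cO S Δ →+* K' where
  toFun x := π x
  map_one' := hs.map_one
  map_mul' x y := hs.map_mul x y x.2 y.2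
  map_zero' := pi_zero hs
  map_add' x y := hs.map_add x y x.2 y.2

lemma specHom_apply (hs : IsSpecialization S Δ T π e) (x : cO S Δ) :
    specHom hs x = π x := rfl

lemma key_v (hconv : IsConvexSubgroup Δ) (hs : IsSpecialization S Δ T π e)
    {a : K} (haO : S.InCoarseO Δ a) (ham : ¬ S.InCoarseM Δ a) :
    ∃ δ : Γ'', S.v a = ((e δ : Γ) : WithTop Γ) ∧ T.v (π a) = (δ : WithTop Γ'') := by
  obtain ⟨γ, hγΔ, hv⟩ := v_mem_of_O_not_M hconv haO ham
  obtain ⟨δ, hδ⟩ := (hs.e_range γ).1 hγΔ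
  exact ⟨δ, by rw [hv, hδ], hs.map_v a δ haO (by rw [hv, hδ])⟩

lemma pi_derIter (hs : IsSpecialization S Δ T π e) {b : K} (hb : S.InCoarseO Δ b) (i : ℕ) :
    π (S.der^[i] b) = T.der^[i] (π b) := by
  induction i with
  | zero => rfl
  | succ i ih =>
    rw [Function.iterate_succ_apply', Function.iterate_succ_apply', ← ih,
      hs.map_der _ (derIter_O hb i)]

lemma mapCoeffs_coeff {K K' : Type u} [Field K] [Field K'] {π : K → K'} (hπ0 : π 0 = 0)
    (P : MvPolynomial ℕ K) (m : ℕ →₀ ℕ) :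
    (mapCoeffs π P).coeff m = π (P.coeff m) := by
  classical
  rw [mapCoeffs, MvPolynomial.coeff_sum]
  simp only [MvPolynomial.coeff_monomial]
  rw [Finset.sum_ite_eq' P.support m (fun m' => π (P.coeff m'))]
  split_ifs with hmem
  · rfl
  · rw [MvPolynomial.notMem_support_iff.1 hmem, hπ0]

/-- the transfer lemma: `ddeg` is preserved under the residue map for
polynomials in `𝒪̇{Y} ∖ 𝔪̇{Y}` -/
lemma transfer (hconv : IsConvexSubgroup Δ) (hs : IsSpecialization S Δ T π e)
    (R : MvPolynomial ℕ (cO S Δ))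
    (hnm : ∃ m, ¬ S.InCoarseM Δ ((MvPolynomial.map (cO S Δ).subtype R).coeff m)) :
    T.ddeg (MvPolynomial.map (specHom hs) R)
      = S.ddeg (MvPolynomial.map (cO S Δ).subtype R) := by
  classical
  set A := MvPolynomial.map (cO S Δ).subtype R with hA
  set B := MvPolynomial.map (specHom hs) R with hB
  have hcoA : ∀ m, A.coeff m = ((R.coeff m : cO S Δ) : K) := fun m => coeff_map _ _ _
  have hAO : ∀ m, S.InCoarseO Δ (A.coeff m) := fun m => by
    rw [hcoA]; exact (R.coeff m).2
  have hcoB : ∀ m, B.coeff m = π ((R.coeff m : cO S Δ) : K) := fun m => coeff_map _ _ _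
  have hB0 : ∀ m, (B.coeff m = 0 ↔ S.InCoarseM Δ (A.coeff m)) := fun m => by
    rw [hcoB, hcoA]
    exact hs.map_zero_iff _ (R.coeff m).2
  obtain ⟨m₁, hm₁⟩ := hnm
  have hm₁A : m₁ ∈ A.support := mem_support_iff.2 (ne_zero_of_not_M hm₁)
  obtain ⟨m₀, hm₀A, hvP⟩ :=
    Finset.exists_mem_eq_inf A.support ⟨m₁, hm₁A⟩ (fun m => S.v (A.coeff m))
  have hvPA : S.vP A = S.v (A.coeff m₀) := hvP
  have hm₀ : ¬ S.InCoarseM Δ (A.coeff m₀) := by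
    obtain ⟨δ₂, hδ₂, hle⟩ := not_M_iff.1 hm₁
    refine not_M_iff.2 ⟨δ₂, hδ₂, le_trans ?_ hle⟩
    rw [← hvPA]
    exact Finset.inf_le hm₁A
  obtain ⟨δ₀, hv₀, hπ₀⟩ := key_v hconv hs (hAO m₀) hm₀
  have hsuppB : ∀ m, m ∈ B.support ↔ ¬ S.InCoarseM Δ (A.coeff m) := fun m => by
    rw [mem_support_iff]
    exact not_congr (hB0 m)
  have hsuppBA : ∀ m ∈ B.support, m ∈ A.support := fun m hm =>
    mem_support_iff.2 (ne_zero_of_not_M ((hsuppB m).1 hm))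
  have hπcoeff : ∀ m, B.coeff m = π (A.coeff m) := fun m => by rw [hcoB, hcoA]
  have hm₀B : m₀ ∈ B.support := (hsuppB m₀).2 hm₀
  have hvPB : T.vP B = (δ₀ : WithTop Γ'') := by
    apply le_antisymm
    · refine le_trans (Finset.inf_le hm₀B) ?_
      rw [hπcoeff m₀, hπ₀]
    · refine Finset.le_inf fun m hmB => ?_
      obtain ⟨δm, hvm, hπm⟩ := key_v hconv hs (hAO m) ((hsuppB m).1 hmB)
      rw [hπcoeff m, hπm]
      refine WithTop.coe_le_coe.2 ((hs.e_strictMono.le_iff_le).1 ?_)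
      have hle0 : S.v (A.coeff m₀) ≤ S.v (A.coeff m) := by
        rw [← hvPA]; exact Finset.inf_le (hsuppBA m hmB)
      rw [hv₀, hvm] at hle0
      exact_mod_cast hle0
  have hfilt : B.support.filter (fun m => T.v (B.coeff m) = T.vP B)
      = A.support.filter (fun m => S.v (A.coeff m) = S.vP A) := by
    ext m
    simp only [Finset.mem_filter]
    constructor
    · rintro ⟨hmB, hveq⟩
      obtain ⟨δm, hvm, hπm⟩ := key_v hconv hs (hAO m) ((hsuppB m).1 hmB)
      have hδm : δm = δ₀ := by
        rw [hπcoeff m, hπm, hvPB] at hveq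
        exact_mod_cast hveq
      refine ⟨hsuppBA m hmB, ?_⟩
      rw [hvm, hδm, hvPA, hv₀]
    · rintro ⟨hmA, hveq⟩
      have hnotM : ¬ S.InCoarseM Δ (A.coeff m) := by
        refine not_M_iff.2 ⟨e δ₀, (hs.e_range (e δ₀)).2 ⟨δ₀, rfl⟩, ?_⟩
        rw [hveq, hvPA, hv₀]
      obtain ⟨δm, hvm, hπm⟩ := key_v hconv hs (hAO m) hnotM
      have hδm : δm = δ₀ := by
        have heq : ((e δm : Γ) : WithTop Γ) = ((e δ₀ : Γ) : WithTop Γ) := by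
          rw [← hvm, hveq, hvPA, hv₀]
        exact hs.e_strictMono.injective (by exact_mod_cast heq)
      refine ⟨(hsuppB m).2 hnotM, ?_⟩
      rw [hπcoeff m, hπm, hδm, hvPB]
  rw [VDF.ddeg, VDF.ddeg, hfilt]

end VDF

end Statement7Main
set_option synthInstance.maxHeartbeats 400000 in

/-- for a proper nontrivial convex subgroup `Δ` of `Γ` with coarsened
valuation ring `𝒪̇`, maximal ideal `𝔪̇`, and specialization `K̇ = 𝒪̇/𝔪̇`: if
`P ∈ 𝒪̇{Y} ∖ 𝔪̇{Y}`, `b ∈ 𝒪̇`, and `h ∈ 𝒪̇ ∖ 𝔪̇`, then `ddeg Ṗ_{+ḃ} = ddeg P_{+b}`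
and `ddeg Ṗ_{×ḣ} = ddeg P_{×h}`. -/
theorem statement7 {K Γ : Type u} [Field K] [AddCommGroup Γ] [LinearOrder Γ] [IsOrderedAddMonoid Γ]
    (S : VDF K Γ) (hder : S.DerNontrivial) (hval : S.ValNontrivial)
    (Δ : AddSubgroup Γ) (hconv : IsConvexSubgroup Δ) (hbot : Δ ≠ ⊥) (htop : Δ ≠ ⊤)
    {K' Γ'' : Type u} [Field K'] [AddCommGroup Γ''] [LinearOrder Γ''] [IsOrderedAddMonoid Γ'']
    (T : VDF K' Γ'') (π : K → K') (e : Γ'' →+ Γ)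
    (hs : VDF.IsSpecialization S Δ T π e)
    (P : MvPolynomial ℕ K)
    (hPO : ∀ m, S.InCoarseO Δ (P.coeff m))
    (hPm : ∃ m, ¬ S.InCoarseM Δ (P.coeff m))
    (b : K) (hb : S.InCoarseO Δ b)
    (h : K) (hhO : S.InCoarseO Δ h) (hhm : ¬ S.InCoarseM Δ h) :
    T.ddeg (T.addConj (π b) (mapCoeffs π P)) = S.ddeg (S.addConj b P) ∧
    T.ddeg (T.mulConj (π h) (mapCoeffs π P)) = S.ddeg (S.mulConj h P) := by
  classical
  obtain ⟨mP, hmP⟩ := hPm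
  set O := VDF.cO S Δ with hO
  set P₀ : MvPolynomial ℕ O :=
    ∑ m ∈ P.support, MvPolynomial.monomial m (⟨P.coeff m, hPO m⟩ : O) with hP₀
  have hι : MvPolynomial.map O.subtype P₀ = P := by
    apply MvPolynomial.ext
    intro m
    rw [MvPolynomial.coeff_map, hP₀, MvPolynomial.coeff_sum]
    simp only [MvPolynomial.coeff_monomial]
    rw [Finset.sum_ite_eq' P.support m (fun m' => (⟨P.coeff m', hPO m'⟩ : O))]
    split_ifs with hmem
    · rfl
    · rw [map_zero]
      exact (MvPolynomial.notMem_support_iff.1 hmem).symm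
  have hcoeffP₀ : ∀ m, ((P₀.coeff m : O) : K) = P.coeff m := fun m => by
    conv_rhs => rw [← hι]
    rw [MvPolynomial.coeff_map]
    rfl
  set ρ := VDF.specHom hs with hρdef
  have hπ0 : π 0 = 0 := VDF.pi_zero hs
  have hmapρ : MvPolynomial.map ρ P₀ = mapCoeffs π P := by
    apply MvPolynomial.ext
    intro m
    rw [MvPolynomial.coeff_map, VDF.mapCoeffs_coeff hπ0, ← hcoeffP₀ m]
    rfl
  -- additive conjugation
  set gb : ℕ → MvPolynomial ℕ O :=
    fun i => MvPolynomial.C (⟨S.der^[i] b, VDF.derIter_O hb i⟩ : O) + MvPolynomial.X i with hgb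
  have h1 : MvPolynomial.map O.subtype (MvPolynomial.bind₁ gb P₀) = S.addConj b P := by
    rw [MvPolynomial.map_bind₁, hι]
    have hfun : (fun i => MvPolynomial.map O.subtype (gb i))
        = fun i => MvPolynomial.C (S.der^[i] b) + MvPolynomial.X i := by
      funext i
      rw [hgb]
      simp only [map_add, MvPolynomial.map_C, MvPolynomial.map_X]
      rfl
    rw [hfun]
    rfl
  have h2 : MvPolynomial.map ρ (MvPolynomial.bind₁ gb P₀)
      = T.addConj (π b) (mapCoeffs π P) := by
    rw [MvPolynomial.map_bind₁, hmapρ]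
    have hfun : (fun i => MvPolynomial.map ρ (gb i))
        = fun i => MvPolynomial.C (T.der^[i] (π b)) + MvPolynomial.X i := by
      funext i
      rw [hgb]
      simp only [map_add, MvPolynomial.map_C, MvPolynomial.map_X]
      refine congrArg (fun z => MvPolynomial.C z + MvPolynomial.X i) ?_
      exact VDF.pi_derIter hs hb i
    rw [hfun]
    rfl
  have hnmA : ∃ m, ¬ S.InCoarseM Δ ((S.addConj b P).coeff m) := by
    by_contra hall
    rw [not_exists] at hall
    simp only [not_not] at hall
    apply hmP
    have hbind := VDF.bind_M (S := S) (Δ := Δ)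
      (g := fun i => MvPolynomial.C (S.der^[i] (-b)) + MvPolynomial.X i)
      (fun i => add_mem (VDF.C_mem_OP (VDF.mem_cO.2 (VDF.derIter_O (VDF.neg_O hb) i))) (VDF.X_mem_OP i))
      (Q := S.addConj b P) hall mP
    have heq : MvPolynomial.bind₁
        (fun i => MvPolynomial.C (S.der^[i] (-b)) + MvPolynomial.X i) (S.addConj b P)
        = S.addConj (-b) (S.addConj b P) := rfl
    rw [heq, VDF.addConj_neg_addConj] at hbind
    exact hbind
  have e1 : T.ddeg (T.addConj (π b) (mapCoeffs π P)) = S.ddeg (S.addConj b P) := by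
    rw [← h1, ← h2]
    exact VDF.transfer hconv hs _ (by rw [h1]; exact hnmA)
  -- multiplicative conjugation
  have hne : h ≠ 0 := VDF.ne_zero_of_not_M hhm
  have hhinvO : S.InCoarseO Δ h⁻¹ := by
    obtain ⟨γ, hγΔ, hv⟩ := VDF.v_mem_of_O_not_M hconv hhO hhm
    exact ⟨-γ, neg_mem hγΔ, le_of_eq (S.v_inv_coe hne hv).symm⟩
  set gh : ℕ → MvPolynomial ℕ O := fun i =>
    ∑ j ∈ Finset.range (i + 1),
      MvPolynomial.C ((i.choose j : O) * (⟨S.der^[i - j] h, VDF.derIter_O hhO (i - j)⟩ : O))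
        * MvPolynomial.X j with hgh
  have h3 : MvPolynomial.map O.subtype (MvPolynomial.bind₁ gh P₀) = S.mulConj h P := by
    rw [MvPolynomial.map_bind₁, hι]
    have hfun : (fun i => MvPolynomial.map O.subtype (gh i))
        = fun i => ∑ j ∈ Finset.range (i + 1),
          MvPolynomial.C ((i.choose j : K) * S.der^[i - j] h) * MvPolynomial.X j := by
      funext i
      rw [hgh, map_sum]
      refine Finset.sum_congr rfl fun j _ => ?_
      simp only [map_mul, MvPolynomial.map_C, MvPolynomial.map_X, map_natCast]
      rfl
    rw [hfun]
    rfl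
  have h4 : MvPolynomial.map ρ (MvPolynomial.bind₁ gh P₀)
      = T.mulConj (π h) (mapCoeffs π P) := by
    rw [MvPolynomial.map_bind₁, hmapρ]
    have hfun : (fun i => MvPolynomial.map ρ (gh i))
        = fun i => ∑ j ∈ Finset.range (i + 1),
          MvPolynomial.C ((i.choose j : K') * T.der^[i - j] (π h)) * MvPolynomial.X j := by
      funext i
      rw [hgh, map_sum]
      refine Finset.sum_congr rfl fun j _ => ?_
      simp only [map_mul, MvPolynomial.map_C, MvPolynomial.map_X, map_natCast]
      refine congrArg (fun z => ((i.choose j : ℕ) : MvPolynomial ℕ K') * MvPolynomial.C z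
        * MvPolynomial.X j) ?_
      exact VDF.pi_derIter hs hhO (i - j)
    rw [hfun]
    rfl
  have hnmM : ∃ m, ¬ S.InCoarseM Δ ((S.mulConj h P).coeff m) := by
    by_contra hall
    rw [not_exists] at hall
    simp only [not_not] at hall
    apply hmP
    have hbind := VDF.bind_M (S := S) (Δ := Δ)
      (g := fun i' => ∑ k ∈ Finset.range (i' + 1),
        MvPolynomial.C ((i'.choose k : K) * S.der^[i' - k] h⁻¹) * MvPolynomial.X k)
      (fun i' => sum_mem fun k _ => mul_mem
        (VDF.C_mem_OP (mul_mem (natCast_mem (VDF.cO S Δ) _) (VDF.mem_cO.2 (VDF.derIter_O hhinvO (i' - k)))))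
        (VDF.X_mem_OP k))
      (Q := S.mulConj h P) hall mP
    have heq : MvPolynomial.bind₁ (fun i' => ∑ k ∈ Finset.range (i' + 1),
        MvPolynomial.C ((i'.choose k : K) * S.der^[i' - k] h⁻¹) * MvPolynomial.X k)
        (S.mulConj h P) = S.mulConj h⁻¹ (S.mulConj h P) := rfl
    rw [heq, VDF.mulConj_inv_mulConj S hne] at hbind
    exact hbind
  have e2 : T.ddeg (T.mulConj (π h) (mapCoeffs π P)) = S.ddeg (S.mulConj h P) := by
    rw [← h3, ← h4]
    exact VDF.transfer hconv hs _ (by rw [h3]; exact hnmM)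
  exact ⟨e1, e2⟩
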